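/- Let Π be a partition of ℕ. The commensurator of the Young subgroup 𝔖_Π in the infinite symmetric group 𝔖_ℕ equals the subgroup of all finitary permutations g of ℕ such that g(B) = B (setwise) for every infinite block B of Π. -/

import Mathlib

/-- The finitary symmetric group `𝔖_A` of a set (type) `A`: the subgroup of `Equiv.Perm A`
consisting of bijections moving only finitely many points. -/
def finitaryPerms (α : Type*) : Subgroup (Equiv.Perm α) where
  carrier := {σ | {x | σ x ≠ x}.Finite}
  one_mem' := by simp
  mul_mem' := by
    intro a b ha hb
    refine Set.Finite.subset (ha.union hb) ?_
    intro x hx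
    by_contra hmem
    simp only [Set.mem_union, Set.mem_setOf_eq, not_or, not_not] at hmem
    exact hx (by simp [Equiv.Perm.mul_apply, hmem.2, hmem.1])
  inv_mem' := by
    intro a ha
    refine Set.Finite.subset (ha.image a) ?_
    intro x hx
    refine ⟨a⁻¹ x, ?_, Equiv.apply_symm_apply a x⟩
    simp only [Set.mem_setOf_eq, Equiv.Perm.coe_inv, Equiv.apply_symm_apply]
    exact fun h => hx h.symm


/-- The Young subgroup `𝔖_Π` associated to a partition `Π` of `ℕ`, as a subgroup of the
infinite symmetric group `𝔖_ℕ` of finitary permutations: all finitary permutations mapping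
every block of `Π` onto itself. -/
def youngSubgroup (P : Set (Set ℕ)) : Subgroup (finitaryPerms ℕ) where
  carrier := {σ | ∀ A ∈ P, (σ : Equiv.Perm ℕ) '' A = A}
  one_mem' := by intro A _; simp
  mul_mem' := by
    intro a b ha hb A hA
    have hcomp : ⇑((a : Equiv.Perm ℕ) * (b : Equiv.Perm ℕ)) =
        ⇑(a : Equiv.Perm ℕ) ∘ ⇑(b : Equiv.Perm ℕ) := rfl
    show ⇑(((a * b : finitaryPerms ℕ)) : Equiv.Perm ℕ) '' A = A
    rw [Subgroup.coe_mul, hcomp, Set.image_comp, hb A hA, ha A hA]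
  inv_mem' := by
    intro a ha A hA
    show ⇑((a⁻¹ : finitaryPerms ℕ) : Equiv.Perm ℕ) '' A = A
    rw [Subgroup.coe_inv]
    have := congrArg (Set.image ⇑(a : Equiv.Perm ℕ)⁻¹) (ha A hA)
    rw [← Set.image_comp,
      (by funext x; simp : ⇑(a : Equiv.Perm ℕ)⁻¹ ∘ ⇑(a : Equiv.Perm ℕ) = id), Set.image_id] at this
    exact this.symm

open Pointwise

namespace YoungAux

variable {P : Set (Set ℕ)}

/-- The block of the partition containing `a`. -/
noncomputable def blk (hP : Setoid.IsPartition P) (a : ℕ) : Set ℕ := (hP.2 a).choose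

lemma blk_mem (hP : Setoid.IsPartition P) (a : ℕ) : blk hP a ∈ P := (hP.2 a).choose_spec.1.1

lemma mem_blk (hP : Setoid.IsPartition P) (a : ℕ) : a ∈ blk hP a := (hP.2 a).choose_spec.1.2

lemma blk_eq (hP : Setoid.IsPartition P) {A : Set ℕ} (hA : A ∈ P) {a : ℕ} (ha : a ∈ A) :
    blk hP a = A := ((hP.2 a).choose_spec.2 A ⟨hA, ha⟩).symm

lemma block_unique (hP : Setoid.IsPartition P) {A B : Set ℕ} (hA : A ∈ P) (hB : B ∈ P)
    {a : ℕ} (ha : a ∈ A) (hb : a ∈ B) : A = B := by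
  rw [← blk_eq hP hA ha, blk_eq hP hB hb]

lemma image_of_fix {σ : Equiv.Perm ℕ} {T : Set ℕ} (h : ∀ x ∈ T, σ x = x) : σ '' T = T := by
  apply Set.Subset.antisymm
  · rintro _ ⟨x, hx, rfl⟩; rw [h x hx]; exact hx
  · intro x hx; exact ⟨x, hx, h x hx⟩

lemma inv_image {σ : Equiv.Perm ℕ} {A : Set ℕ} (h : σ '' A = A) : ⇑σ⁻¹ '' A = A := by
  conv_lhs => rw [← h]
  rw [← Set.image_comp, (by funext x; simp : ⇑σ⁻¹ ∘ ⇑σ = id), Set.image_id]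

lemma young_apply_mem (hP : Setoid.IsPartition P) {σ : finitaryPerms ℕ}
    (hσ : σ ∈ youngSubgroup P) {A : Set ℕ} (hA : A ∈ P) {a : ℕ} (ha : a ∈ A) :
    (σ : Equiv.Perm ℕ) a ∈ A := by
  have h := hσ A hA
  exact h ▸ Set.mem_image_of_mem _ ha

/-- swap as an element of the finitary permutations -/
def swapG (a b : ℕ) : finitaryPerms ℕ :=
  ⟨Equiv.swap a b, ((Set.finite_singleton b).insert a).subset (by
    intro x hx
    by_contra hmem
    simp only [Set.mem_insert_iff, Set.mem_singleton_iff, not_or] at hmem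
    exact hx (Equiv.swap_apply_of_ne_of_ne hmem.1 hmem.2))⟩

@[simp] lemma swapG_coe (a b : ℕ) : ((swapG a b : finitaryPerms ℕ) : Equiv.Perm ℕ) = Equiv.swap a b := rfl

@[simp] lemma swapG_inv (a b : ℕ) : (swapG a b)⁻¹ = swapG a b := by
  ext x
  simp [swapG, Equiv.swap_inv]

lemma swap_apply_mem {a b x : ℕ} {C : Set ℕ} (ha : a ∈ C) (hb : b ∈ C) (hx : x ∈ C) :
    Equiv.swap a b x ∈ C := by
  by_cases h1 : x = a
  · subst h1; rw [Equiv.swap_apply_left]; exact hb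
  by_cases h2 : x = b
  · subst h2; rw [Equiv.swap_apply_right]; exact ha
  · rw [Equiv.swap_apply_of_ne_of_ne h1 h2]; exact hx

lemma swapG_mem_young (hP : Setoid.IsPartition P) {A : Set ℕ} (hA : A ∈ P) {a b : ℕ}
    (ha : a ∈ A) (hb : b ∈ A) : swapG a b ∈ youngSubgroup P := by
  intro C hC
  rw [swapG_coe]
  by_cases haC : a ∈ C
  · have hCA : C = A := block_unique hP hC hA haC ha
    subst hCA
    apply Set.Subset.antisymm
    · rintro _ ⟨x, hx, rfl⟩; exact swap_apply_mem haC hb hx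
    · intro x hx
      exact ⟨Equiv.swap a b x, swap_apply_mem haC hb hx, Equiv.swap_apply_self a b x⟩
  · by_cases hbC : b ∈ C
    · have hCA : C = A := block_unique hP hC hA hbC hb
      exact absurd (hCA ▸ ha) haC
    · exact image_of_fix fun x hx => Equiv.swap_apply_of_ne_of_ne
        (fun h => haC (h ▸ hx)) (fun h => hbC (h ▸ hx))

lemma mem_conj_iff {g x : finitaryPerms ℕ} {H : Subgroup (finitaryPerms ℕ)} :
    x ∈ ConjAct.toConjAct g • H ↔ g⁻¹ * x * g ∈ H := by
  rw [Subgroup.mem_pointwise_smul_iff_inv_smul_mem, ← ConjAct.toConjAct_inv, ConjAct.smul_def,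
    ConjAct.ofConjAct_toConjAct, inv_inv]


lemma relindexA (hP : Setoid.IsPartition P) (g : finitaryPerms ℕ) {B : Set ℕ} (hB : B ∈ P)
    (hBi : B.Infinite) {b : ℕ} (hb : b ∈ B) (hgb : (g : Equiv.Perm ℕ) b ∉ B) :
    (youngSubgroup P).relIndex (ConjAct.toConjAct g • youngSubgroup P) = 0 := by
  set H := youngSubgroup P with hH
  set c := (g : Equiv.Perm ℕ) b with hc
  set T : Set ℕ := B \ ({x | (g : Equiv.Perm ℕ) x ≠ x} ∪ {b, c}) with hT
  have hTi : T.Infinite := hBi.diff (g.2.union ((Set.finite_singleton c).insert b))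
  haveI : Infinite ↥T := hTi.to_subtype
  -- each x in T gives an element of the conjugate subgroup
  have hmem : ∀ x ∈ T, swapG c x ∈ ConjAct.toConjAct g • H := by
    intro x hx
    obtain ⟨hxB, hxn⟩ := hx
    simp only [Set.mem_union, Set.mem_setOf_eq, Set.mem_insert_iff, Set.mem_singleton_iff,
      not_or, not_not] at hxn
    rw [mem_conj_iff]
    have hconj : g⁻¹ * swapG c x * g = swapG b x := by
      ext y
      have := Equiv.swap_apply_apply (g : Equiv.Perm ℕ)⁻¹ c x
      have hgc : (g : Equiv.Perm ℕ)⁻¹ c = b := by rw [hc, Equiv.Perm.coe_inv, Equiv.symm_apply_apply]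
      have hgx : (g : Equiv.Perm ℕ)⁻¹ x = x := by
        conv_lhs => rw [← hxn.1]
        rw [Equiv.Perm.coe_inv, Equiv.symm_apply_apply]
      simp only [Subgroup.coe_mul, InvMemClass.coe_inv, swapG_coe]
      rw [show ((g : Equiv.Perm ℕ)⁻¹ * Equiv.swap c x * g : Equiv.Perm ℕ)
          = (g : Equiv.Perm ℕ)⁻¹ * Equiv.swap c x * ((g : Equiv.Perm ℕ)⁻¹)⁻¹ by rw [inv_inv]]
      rw [← this, hgc, hgx]
    rw [hconj]
    exact swapG_mem_young hP hB hb hxB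
  -- the map into the quotient
  let Q := ↥(ConjAct.toConjAct g • H) ⧸ H.subgroupOf (ConjAct.toConjAct g • H)
  let ψ : ↥T → Q := fun x => QuotientGroup.mk ⟨swapG c x, hmem x x.2⟩
  have hinj : Function.Injective ψ := by
    intro x y h
    by_contra hne
    have hxy : (x : ℕ) ≠ (y : ℕ) := fun hxy => hne (Subtype.ext hxy)
    rw [QuotientGroup.eq] at h
    rw [Subgroup.mem_subgroupOf] at h
    have hcoe : (((⟨swapG c x, hmem x x.2⟩ : ↥(ConjAct.toConjAct g • H))⁻¹
        * ⟨swapG c y, hmem y y.2⟩ : ↥(ConjAct.toConjAct g • H)) : finitaryPerms ℕ)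
        = swapG c x * swapG c y := by
      simp
    rw [hcoe] at h
    -- apply this permutation to c
    have hyB : (y : ℕ) ∈ B := y.2.1
    have hyn : (y : ℕ) ≠ c := by
      intro hyc; exact hgb (hyc ▸ hyB)
    have happ : ((swapG c x * swapG c y : finitaryPerms ℕ) : Equiv.Perm ℕ) c = y := by
      simp only [Subgroup.coe_mul, swapG_coe, Equiv.Perm.mul_apply, Equiv.swap_apply_left]
      exact Equiv.swap_apply_of_ne_of_ne hyn (Ne.symm hxy)
    have hcmem : c ∈ blk hP c := mem_blk hP c
    have himg := young_apply_mem hP h (blk_mem hP c) hcmem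
    rw [happ] at himg
    have : blk hP c = B := block_unique hP (blk_mem hP c) hB himg hyB
    exact hgb (hc ▸ (this ▸ hcmem))
  haveI : Infinite Q := Infinite.of_injective ψ hinj
  rw [Subgroup.relIndex, Subgroup.index_eq_card]
  exact Nat.card_eq_zero_of_infinite


lemma relindex_smul {G : Type*} [Group G] (H K : Subgroup G) (gc : ConjAct G) :
    (gc • H).relIndex (gc • K) = H.relIndex K := by
  rw [Subgroup.relIndex, Subgroup.relIndex, Subgroup.index_eq_card, Subgroup.index_eq_card]
  exact (Nat.card_congr (Subgroup.quotConjEquiv H K gc)).symm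

lemma relindexB (hP : Setoid.IsPartition P) (g : finitaryPerms ℕ)
    (hg : ∀ B ∈ P, B.Infinite → (g : Equiv.Perm ℕ) '' B = B) :
    (ConjAct.toConjAct g • youngSubgroup P).relIndex (youngSubgroup P) ≠ 0 := by
  set H := youngSubgroup P with hH
  set S : Set ℕ := {x | (g : Equiv.Perm ℕ) x ≠ x} with hS
  have hSfin : S.Finite := g.2
  set U : Set ℕ := ⋃ x ∈ {x ∈ S | (blk hP x).Finite}, blk hP x with hU
  have hUfin : U.Finite :=
    Set.Finite.biUnion (hSfin.subset (Set.sep_subset _ _)) fun x hx => hx.2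
  -- blocks of elements of U are inside U
  have hblkU : ∀ u ∈ U, blk hP u ⊆ U := by
    intro u hu
    rw [hU] at hu
    simp only [Set.mem_iUnion, exists_prop] at hu
    obtain ⟨x, hx, hux⟩ := hu
    have : blk hP u = blk hP x := blk_eq hP (blk_mem hP x) hux
    rw [this, hU]
    exact Set.subset_biUnion_of_mem hx
  have hmemU : ∀ σ ∈ H, ∀ u ∈ U, (σ : Equiv.Perm ℕ) u ∈ U := by
    intro σ hσ u hu
    exact hblkU u hu (young_apply_mem hP hσ (blk_mem hP u) (mem_blk hP u))
  -- blocks not preserved by g live inside U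
  have hf2 : ∀ A ∈ P, (g : Equiv.Perm ℕ) '' A ≠ A →
      A ⊆ U ∧ (g : Equiv.Perm ℕ) '' A ⊆ U := by
    intro A hA hgA
    have hAfin : A.Finite := by
      by_contra hAinf
      exact hgA (hg A hA hAinf)
    have hex : ∃ a ∈ A, a ∈ S := by
      by_contra hno
      push_neg at hno
      exact hgA (image_of_fix fun x hx => not_not.mp (hno x hx))
    obtain ⟨a, haA, haS⟩ := hex
    have hblka : blk hP a = A := blk_eq hP hA haA
    have hasep : a ∈ {x ∈ S | (blk hP x).Finite} := ⟨haS, hblka ▸ hAfin⟩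
    have hAU : A ⊆ U := by
      rw [← hblka, hU]; exact Set.subset_biUnion_of_mem hasep
    refine ⟨hAU, ?_⟩
    rintro _ ⟨x, hxA, rfl⟩
    by_cases hfx : (g : Equiv.Perm ℕ) x = x
    · rw [hfx]; exact hAU hxA
    · have hgxS : (g : Equiv.Perm ℕ) x ∈ S := by
        intro hfix
        have : (g : Equiv.Perm ℕ) ((g : Equiv.Perm ℕ) x) = (g : Equiv.Perm ℕ) x := hfix
        exact hfx ((g : Equiv.Perm ℕ).injective this)
      have hblkfin : (blk hP ((g : Equiv.Perm ℕ) x)).Finite := by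
        by_contra hinf
        have hBinf : (blk hP ((g : Equiv.Perm ℕ) x)).Infinite := hinf
        have himg := hg _ (blk_mem hP ((g : Equiv.Perm ℕ) x)) hBinf
        have hxin : x ∈ blk hP ((g : Equiv.Perm ℕ) x) := by
          have := inv_image himg
          have hmem : (g : Equiv.Perm ℕ)⁻¹ ((g : Equiv.Perm ℕ) x) ∈
              ⇑(g : Equiv.Perm ℕ)⁻¹ '' blk hP ((g : Equiv.Perm ℕ) x) :=
            Set.mem_image_of_mem _ (mem_blk hP _)
          rw [this] at hmem
          rwa [Equiv.Perm.coe_inv, Equiv.symm_apply_apply] at hmem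
        have : blk hP ((g : Equiv.Perm ℕ) x) = A :=
          block_unique hP (blk_mem hP _) hA hxin hxA
        exact hBinf.mono (le_of_eq this) hAfin
      have : (g : Equiv.Perm ℕ) x ∈ {x ∈ S | (blk hP x).Finite} := ⟨hgxS, hblkfin⟩
      rw [hU]
      exact Set.subset_biUnion_of_mem this (mem_blk hP _)
  -- the key: fixing U pointwise puts you in the conjugate
  have hkey : ∀ ρ : finitaryPerms ℕ, ρ ∈ H → (∀ u ∈ U, (ρ : Equiv.Perm ℕ) u = u) →
      ρ ∈ ConjAct.toConjAct g • H := by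
    intro ρ hρ hfix
    rw [mem_conj_iff]
    intro A hA
    have hcoe : ((g⁻¹ * ρ * g : finitaryPerms ℕ) : Equiv.Perm ℕ)
        = (g : Equiv.Perm ℕ)⁻¹ * (ρ : Equiv.Perm ℕ) * (g : Equiv.Perm ℕ) := by
      simp
    rw [hcoe]
    have hsplit : ⇑((g : Equiv.Perm ℕ)⁻¹ * (ρ : Equiv.Perm ℕ) * (g : Equiv.Perm ℕ)) '' A
        = ⇑(g : Equiv.Perm ℕ)⁻¹ '' (⇑(ρ : Equiv.Perm ℕ) '' (⇑(g : Equiv.Perm ℕ) '' A)) := by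
      rw [← Set.image_comp, ← Set.image_comp]; rfl
    rw [hsplit]
    by_cases himg : (g : Equiv.Perm ℕ) '' A = A
    · rw [himg, hρ A hA, inv_image himg]
    · have h2 := (hf2 A hA himg).2
      rw [image_of_fix fun x hx => hfix x (h2 hx)]
      rw [← Set.image_comp, (by funext x; simp :
        ⇑(g : Equiv.Perm ℕ)⁻¹ ∘ ⇑(g : Equiv.Perm ℕ) = id), Set.image_id]
  -- finiteness of the quotient
  haveI : Finite ↥U := hUfin
  let Q := ↥H ⧸ (ConjAct.toConjAct g • H).subgroupOf H
  let F : Q → (↥U → ↥U) := fun q => fun u =>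
    ⟨(((q.out : ↥H) : finitaryPerms ℕ) : Equiv.Perm ℕ) u, hmemU _ q.out.2 u u.2⟩
  have hFinj : Function.Injective F := by
    intro q1 q2 h
    have hagree : ∀ u ∈ U, (((q1.out : ↥H) : finitaryPerms ℕ) : Equiv.Perm ℕ) u
        = (((q2.out : ↥H) : finitaryPerms ℕ) : Equiv.Perm ℕ) u := by
      intro u hu
      have := congrFun h ⟨u, hu⟩
      exact congrArg Subtype.val this
    rw [← Quotient.out_eq q1, ← Quotient.out_eq q2]
    have : (QuotientGroup.mk q1.out : Q) = QuotientGroup.mk q2.out := by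
      rw [QuotientGroup.eq, Subgroup.mem_subgroupOf]
      apply hkey
      · exact Subgroup.mul_mem _ (Subgroup.inv_mem _ q1.out.2) q2.out.2
      · intro u hu
        have hcoe : (((q1.out⁻¹ * q2.out : ↥H)) : finitaryPerms ℕ)
            = ((q1.out : ↥H) : finitaryPerms ℕ)⁻¹ * ((q2.out : ↥H) : finitaryPerms ℕ) := by
          simp
        rw [hcoe]
        have heq : (((q2.out : ↥H) : finitaryPerms ℕ) : Equiv.Perm ℕ) u
            = (((q1.out : ↥H) : finitaryPerms ℕ) : Equiv.Perm ℕ) u := (hagree u hu).symm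
        simp only [Subgroup.coe_mul, InvMemClass.coe_inv, Equiv.Perm.mul_apply]
        rw [heq]
        exact Equiv.symm_apply_apply _ _
    exact this
  haveI : Finite Q := Finite.of_injective F hFinj
  rw [Subgroup.relIndex]
  exact Subgroup.index_ne_zero_of_finite

end YoungAux

/-- The commensurator of a Young subgroup `𝔖_Π` in the infinite symmetric group `𝔖_ℕ` consists
exactly of the finitary permutations that map every infinite block of `Π` onto itself. -/
theorem commensurator_youngSubgroup (P : Set (Set ℕ)) (hP : Setoid.IsPartition P) :
    ∀ g : finitaryPerms ℕ, g ∈ Subgroup.Commensurable.commensurator (youngSubgroup P) ↔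
      ∀ B ∈ P, B.Infinite → (g : Equiv.Perm ℕ) '' B = B := by
  intro g
  rw [Subgroup.Commensurable.commensurator_mem_iff]
  constructor
  · intro hcomm B hB hBi
    apply Set.Subset.antisymm
    · rintro _ ⟨b, hb, rfl⟩
      by_contra hgb
      exact hcomm.2 (YoungAux.relindexA hP g hB hBi hb hgb)
    · intro a ha
      have h2 : (g : Equiv.Perm ℕ)⁻¹ a ∈ B := by
        by_contra hga
        have hmem : g ∈ Subgroup.Commensurable.commensurator (youngSubgroup P) := hcomm
        have hinv := Subgroup.inv_mem _ hmem
        rw [Subgroup.Commensurable.commensurator_mem_iff] at hinv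
        apply hinv.2
        have hga' : ((g⁻¹ : finitaryPerms ℕ) : Equiv.Perm ℕ) a ∉ B := by
          simpa using hga
        exact YoungAux.relindexA hP g⁻¹ hB hBi ha hga'
      exact ⟨_, h2, Equiv.apply_symm_apply _ _⟩
  · intro hg
    have hg' : ∀ B ∈ P, B.Infinite → ((g⁻¹ : finitaryPerms ℕ) : Equiv.Perm ℕ) '' B = B := by
      intro B hB hBi
      have hco : ((g⁻¹ : finitaryPerms ℕ) : Equiv.Perm ℕ) = ((g : Equiv.Perm ℕ))⁻¹ := by simp
      rw [hco]
      exact YoungAux.inv_image (hg B hB hBi)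
    refine ⟨YoungAux.relindexB hP g hg, ?_⟩
    have hsm := YoungAux.relindex_smul (youngSubgroup P)
      (ConjAct.toConjAct g • youngSubgroup P) (ConjAct.toConjAct g)⁻¹
    rw [inv_smul_smul, ← ConjAct.toConjAct_inv] at hsm
    rw [← hsm]
    exact YoungAux.relindexB hP g⁻¹ hg'
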